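/- Let k be a field and (A, 𝔪) a local noetherian k-algebra of dimension 1 with residue field k. Suppose there exist z ∈ 𝔪 such that A has no z-torsion and a nilpotent ideal I with 𝔪 = (z) + I. Then e(A) = dim_k A/(z). -/

import Mathlib

open IsLocalRing Submodule Module

lemma statement6_pow_sup_le {R : Type*} [CommRing R] (a b : Ideal R) :
    ∀ n : ℕ, (a ⊔ b) ^ (n + 1) ≤ a * (a ⊔ b) ^ n ⊔ b ^ (n + 1) := by
  intro n
  induction n with
  | zero =>
      simp
  | succ n ih =>
      have h1 : (a ⊔ b) ^ (n + 2) = (a ⊔ b) ^ (n + 1) * (a ⊔ b) := pow_succ _ _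
      rw [h1]
      refine le_trans (Ideal.mul_mono_left ih) ?_
      rw [Submodule.sup_mul, Submodule.mul_sup, Submodule.mul_sup]
      have hpow : (a ⊔ b) ^ n * (a ⊔ b) = (a ⊔ b) ^ (n + 1) := (pow_succ _ _).symm
      have e1 : a * (a ⊔ b) ^ n * a ≤ a * (a ⊔ b) ^ (n + 1) := by
        rw [mul_assoc, ← hpow]
        exact Ideal.mul_mono_right (Ideal.mul_mono_right le_sup_left)
      have e2 : a * (a ⊔ b) ^ n * b ≤ a * (a ⊔ b) ^ (n + 1) := by
        rw [mul_assoc, ← hpow]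
        exact Ideal.mul_mono_right (Ideal.mul_mono_right le_sup_right)
      have e3 : b ^ (n + 1) * a ≤ a * (a ⊔ b) ^ (n + 1) := by
        rw [mul_comm]
        exact Ideal.mul_mono_right (Ideal.pow_right_mono le_sup_right _)
      have e4 : b ^ (n + 1) * b ≤ b ^ (n + 2) := le_of_eq (pow_succ b (n + 1)).symm
      exact sup_le (sup_le (e1.trans le_sup_left) (e2.trans le_sup_left))
        (sup_le (e3.trans le_sup_left) (e4.trans le_sup_right))


lemma statement6_findim {k A : Type*} [Field k] [CommRing A] [Algebra k A]
    [IsNoetherianRing A] [IsLocalRing A]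
    (hres : Function.Bijective ((IsLocalRing.residue A).comp (algebraMap k A))) (n : ℕ) :
    FiniteDimensional k (A ⧸ (maximalIdeal A) ^ n) := by
  classical
  have decomp : ∀ a : A, ∃ c : k, a - algebraMap k A c ∈ maximalIdeal A := by
    intro a
    obtain ⟨c, hc⟩ := hres.2 (residue A a)
    refine ⟨c, Ideal.Quotient.eq_zero_iff_mem.mp ?_⟩
    have hc' : residue A (algebraMap k A c) = residue A a := hc
    rw [map_sub, sub_eq_zero]
    exact hc'.symm
  have main : ∀ n : ℕ, ∃ S : Finset A,
      Submodule.span k (S : Set A) ⊔ ((maximalIdeal A ^ n).restrictScalars k) = ⊤ := by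
    intro n
    induction n with
    | zero => exact ⟨∅, by simp [Ideal.one_eq_top]⟩
    | succ n ih =>
        obtain ⟨S, hS⟩ := ih
        obtain ⟨G, hG⟩ := IsNoetherian.noetherian (maximalIdeal A ^ n)
        refine ⟨S ∪ G, ?_⟩
        have hGsub : ∀ g ∈ G, g ∈ maximalIdeal A ^ n := by
          intro g hg
          rw [← hG]
          exact Submodule.subset_span hg
        have key : ((maximalIdeal A ^ n).restrictScalars k) ≤
            Submodule.span k (G : Set A) ⊔ ((maximalIdeal A ^ (n+1)).restrictScalars k) := by
          intro x hx
          have hx' : x ∈ Submodule.span A (G : Set A) := by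
            rw [hG]; exact hx
          obtain ⟨f, hf⟩ := mem_span_finset.mp hx'
          choose c hc using fun g => decomp (f g)
          have hxe : x = (∑ g ∈ G, (c g) • g) +
              ∑ g ∈ G, (f g - algebraMap k A (c g)) • g := by
            rw [← hf.2, ← Finset.sum_add_distrib]
            refine Finset.sum_congr rfl fun g _ => ?_
            simp only [smul_eq_mul, Algebra.smul_def]
            ring
          rw [hxe]
          refine add_mem (Submodule.mem_sup_left ?_) (Submodule.mem_sup_right ?_)
          · exact Submodule.sum_mem _ fun g hg =>
              Submodule.smul_mem _ _ (Submodule.subset_span hg)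
          · show _ ∈ maximalIdeal A ^ (n+1)
            rw [pow_succ']
            exact Submodule.sum_mem _ fun g hg => by
              rw [smul_eq_mul]
              exact Ideal.mul_mem_mul (hc g) (hGsub g hg)
        rw [eq_top_iff, ← hS]
        refine sup_le (le_sup_of_le_left (Submodule.span_mono
          (Finset.coe_subset.mpr Finset.subset_union_left))) ?_
        refine key.trans (sup_le (le_sup_of_le_left (Submodule.span_mono ?_)) le_sup_right)
        exact Finset.coe_subset.mpr Finset.subset_union_right
  obtain ⟨S, hS⟩ := main n
  set q : A →ₗ[k] (A ⧸ (maximalIdeal A) ^ n) :=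
    ((maximalIdeal A ^ n).mkQ).restrictScalars k with hq
  have hmap := congrArg (Submodule.map q) hS
  rw [Submodule.map_sup, Submodule.map_span, Submodule.map_top] at hmap
  have h0 : Submodule.map q ((maximalIdeal A ^ n).restrictScalars k) = ⊥ := by
    rw [eq_bot_iff]
    rintro y ⟨x, hx, rfl⟩
    simp only [Submodule.mem_bot]
    exact (Submodule.Quotient.mk_eq_zero _).mpr hx
  have hrange : LinearMap.range q = ⊤ :=
    LinearMap.range_eq_top.mpr ((maximalIdeal A ^ n).mkQ_surjective)
  rw [h0, sup_bot_eq, hrange] at hmap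
  refine ⟨⟨S.image q, ?_⟩⟩
  rw [Finset.coe_image, hmap]

/-- let `(A, 𝔪)` be a local noetherian `k`-algebra of dimension 1 with
residue field `k`.  If `z ∈ 𝔪` is such that `A` has no `z`-torsion and there is a
nilpotent ideal `I` with `𝔪 = (z) + I`, then the Hilbert–Samuel multiplicity `e(A)`
(the eventual value of `dim_k (A/𝔪^{n+1}) − dim_k (A/𝔪^n)`) equals `dim_k A/(z)`. -/
theorem statement_6 (k A : Type*) [Field k] [CommRing A] [Algebra k A]
    [IsNoetherianRing A] [IsLocalRing A]
    (hdim : ringKrullDim A = 1)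
    (hres : Function.Bijective ((IsLocalRing.residue A).comp (algebraMap k A)))
    (z : A) (hz : z ∈ IsLocalRing.maximalIdeal A)
    (htor : ∀ a : A, z * a = 0 → a = 0)
    (I : Ideal A) (hI : IsNilpotent I)
    (hmax : IsLocalRing.maximalIdeal A = Ideal.span {z} ⊔ I) :
    ∃ N : ℕ, ∀ n ≥ N,
      Module.finrank k (A ⧸ (IsLocalRing.maximalIdeal A) ^ (n + 1)) =
        Module.finrank k (A ⧸ (IsLocalRing.maximalIdeal A) ^ n) +
          Module.finrank k (A ⧸ (Ideal.span {z} : Ideal A)) := by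
  classical
  have findim : ∀ n, FiniteDimensional k (A ⧸ (IsLocalRing.maximalIdeal A) ^ n) :=
    statement6_findim hres
  have powle := fun (a b : Ideal A) (n : ℕ) => statement6_pow_sup_le a b n
  obtain ⟨m, hm⟩ := hI
  have hzle : Ideal.span {z} ≤ maximalIdeal A := by
    rw [Ideal.span_le]; exact Set.singleton_subset_iff.mpr hz
  have key : ∀ t : ℕ, maximalIdeal A ^ (m + t + 1) =
      Ideal.span {z} * maximalIdeal A ^ (m + t) := by
    intro t
    apply le_antisymm
    · have h1 := powle (Ideal.span {z}) I (m + t)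
      rw [← hmax] at h1
      have h2 : I ^ (m + t + 1) = 0 := by
        have he : I ^ (m + t + 1) = I ^ m * I ^ (t + 1) := by
          rw [← pow_add]; ring_nf
        rw [he, hm, zero_mul]
      rw [h2] at h1
      simpa using h1
    · calc Ideal.span {z} * maximalIdeal A ^ (m + t)
          ≤ maximalIdeal A * maximalIdeal A ^ (m + t) := Ideal.mul_mono_left hzle
        _ = maximalIdeal A ^ (m + t + 1) := (pow_succ' _ _).symm
  refine ⟨m, fun n hn => ?_⟩
  obtain ⟨t, rfl⟩ := Nat.exists_eq_add_of_le hn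
  haveI := findim (m + t + 1)
  haveI := findim (m + t)
  set Mn : Ideal A := maximalIdeal A ^ (m + t) with hMn
  set Mn1 : Ideal A := maximalIdeal A ^ (m + t + 1) with hMn1
  have hkey : Mn1 = Ideal.span {z} * Mn := key t
  have hle : Mn1 ≤ Ideal.span {z} := by rw [hkey]; exact Ideal.mul_le_inf.trans inf_le_left
  -- the multiplication-by-z map
  set g : A →ₗ[A] A ⧸ Mn1 := Mn1.mkQ.comp (LinearMap.lsmul A A z) with hg
  have hgapp : ∀ a : A, g a = Submodule.Quotient.mk (z * a) := fun a => rfl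
  have hker1 : Mn ≤ LinearMap.ker g := by
    intro a ha
    rw [LinearMap.mem_ker, hgapp, Submodule.Quotient.mk_eq_zero]
    rw [hMn1, pow_succ']
    exact Ideal.mul_mem_mul hz ha
  set fA : (A ⧸ Mn) →ₗ[A] A ⧸ Mn1 := Mn.liftQ g hker1 with hfA
  have hker2 : LinearMap.ker g ≤ Mn := by
    intro a ha
    rw [LinearMap.mem_ker, hgapp, Submodule.Quotient.mk_eq_zero, hkey] at ha
    obtain ⟨b, hb, hzb⟩ := Ideal.mem_span_singleton_mul.mp ha
    have hab : a = b := by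
      have h0 := htor (a - b) (by rw [mul_sub, hzb, sub_self])
      have := sub_eq_zero.mp h0
      exact this
    rwa [hab]
  have hinj : Function.Injective fA := by
    rw [← LinearMap.ker_eq_bot]
    exact Submodule.ker_liftQ_eq_bot _ _ _ hker2
  have hrange : LinearMap.range fA = Submodule.map Mn1.mkQ (Ideal.span {z}) := by
    rw [hfA, Submodule.range_liftQ]
    ext y
    constructor
    · rintro ⟨a, rfl⟩
      exact ⟨z * a, Ideal.mem_span_singleton'.mpr ⟨a, mul_comm a z⟩, (hgapp a).symm⟩
    · rintro ⟨x, hx, rfl⟩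
      obtain ⟨a, rfl⟩ := Ideal.mem_span_singleton'.mp hx
      exact ⟨a, by rw [hgapp, mul_comm]; rfl⟩
  -- finrank bookkeeping
  set r' : Submodule k (A ⧸ Mn1) := (LinearMap.range fA).restrictScalars k with hr'
  have h1 : finrank k ((A ⧸ Mn1) ⧸ r') + finrank k r' = finrank k (A ⧸ Mn1) :=
    Submodule.finrank_quotient_add_finrank r'
  have h2 : finrank k r' = finrank k (A ⧸ Mn) := by
    have hre : r' = LinearMap.range (fA.restrictScalars k) := by
      ext x; simp [hr']
    rw [hre]
    exact LinearMap.finrank_range_of_inj hinj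
  have h3 : finrank k ((A ⧸ Mn1) ⧸ r') = finrank k (A ⧸ (Ideal.span {z} : Ideal A)) := by
    have e1 : ((A ⧸ Mn1) ⧸ r') ≃ₗ[k] ((A ⧸ Mn1) ⧸ (LinearMap.range fA)) :=
      Submodule.Quotient.restrictScalarsEquiv k (LinearMap.range fA)
    have e2 : ((A ⧸ Mn1) ⧸ (LinearMap.range fA)) ≃ₗ[A] A ⧸ (Ideal.span {z} : Ideal A) :=
      (Submodule.quotEquivOfEq _ _ hrange).trans
        (Submodule.quotientQuotientEquivQuotient Mn1 (Ideal.span {z}) hle)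
    exact (e1.trans (e2.restrictScalars k)).finrank_eq
  rw [← h1, h2, h3]
  ring
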